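/- Let g ∈ R = MvPolynomial (Fin N) ℂ be a nonzero M-homogeneous polynomial. Then the operator Φ_g on the Macaulay dual space D_0 defined by Φ_g(∂)(f) = ∂(g·f) admits a linear right inverse: there exists a ℂ-linear map Ψ : R →ₗ[ℂ] R such that for all p, f ∈ R, λ_{Ψ(p)}(g·f) = λ_p(f), i.e. Φ_g ∘ Ψ_g is the identity on D_0. -/

import Mathlib

open MvPolynomial

/-- The Macaulay pairing `λ_p(f) = ∑_α coeff(α,p) * coeff(α,f)`, as a linear functional. -/
noncomputable def lam {N : ℕ} (p : MvPolynomial (Fin N) ℂ) :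
    MvPolynomial (Fin N) ℂ →ₗ[ℂ] ℂ where
  toFun f := ∑ α ∈ p.support, coeff α p * coeff α f
  map_add' f g := by simp [mul_add, Finset.sum_add_distrib]
  map_smul' c f := by
    simp [MvPolynomial.coeff_smul, Finset.mul_sum, mul_left_comm]

/-- An ideal is `M`-graded if it is generated by a set of `M`-homogeneous polynomials. -/
def IsMGraded {N : ℕ} {M : Type*} [AddCommGroup M] (w : Fin N → M)
    (I : Ideal (MvPolynomial (Fin N) ℂ)) : Prop :=
  ∃ S : Set (MvPolynomial (Fin N) ℂ),
    (∀ s ∈ S, ∃ m : M, s.IsWeightedHomogeneous w m) ∧ I = Ideal.span S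

lemma lam_apply {N : ℕ} (p f : MvPolynomial (Fin N) ℂ) :
    lam p f = ∑ α ∈ p.support, coeff α p * coeff α f := rfl

lemma lam_eq_sum {N : ℕ} (p f : MvPolynomial (Fin N) ℂ) {s : Finset (Fin N →₀ ℕ)}
    (h : p.support ⊆ s) : lam p f = ∑ α ∈ s, coeff α p * coeff α f := by
  rw [lam_apply]
  exact Finset.sum_subset h (fun α _ hα => by
    simp [MvPolynomial.notMem_support_iff.mp hα])

lemma lam_comm {N : ℕ} (p f : MvPolynomial (Fin N) ℂ) : lam p f = lam f p := by
  rw [lam_eq_sum p f (s := p.support ∪ f.support) Finset.subset_union_left,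
    lam_eq_sum f p (s := p.support ∪ f.support) Finset.subset_union_right]
  exact Finset.sum_congr rfl fun α _ => mul_comm _ _

/-- Contraction by `g`, the formal adjoint of multiplication by `g` for the Macaulay
pairing. -/
noncomputable def Cg {N : ℕ} (g : MvPolynomial (Fin N) ℂ) :
    MvPolynomial (Fin N) ℂ →ₗ[ℂ] MvPolynomial (Fin N) ℂ where
  toFun q := ∑ γ ∈ g.support, coeff γ g • q.divMonomial γ
  map_add' q r := by
    ext β
    simp [MvPolynomial.coeff_sum, MvPolynomial.coeff_smul,
      MvPolynomial.coeff_divMonomial, mul_add, Finset.sum_add_distrib]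
  map_smul' c q := by
    ext β
    simp [MvPolynomial.coeff_sum, MvPolynomial.coeff_smul,
      MvPolynomial.coeff_divMonomial, Finset.mul_sum, mul_left_comm]

lemma coeff_Cg {N : ℕ} (g q : MvPolynomial (Fin N) ℂ) (β : Fin N →₀ ℕ) :
    coeff β (Cg g q) = ∑ γ ∈ g.support, coeff γ g * coeff (γ + β) q := by
  simp [Cg, MvPolynomial.coeff_sum, MvPolynomial.coeff_smul,
    MvPolynomial.coeff_divMonomial, smul_eq_mul]

lemma lam_monomial_mul {N : ℕ} (q f : MvPolynomial (Fin N) ℂ) (γ : Fin N →₀ ℕ) (c : ℂ) :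
    lam q (monomial γ c * f) = c * lam (q.divMonomial γ) f := by
  rw [lam_apply, lam_apply, Finset.mul_sum]
  simp only [MvPolynomial.coeff_monomial_mul', mul_ite, mul_zero]
  rw [← Finset.sum_filter]
  refine Finset.sum_nbij' (i := fun α => α - γ) (j := fun β => γ + β) ?_ ?_ ?_ ?_ ?_
  · intro α hα
    simp only [Finset.mem_filter, MvPolynomial.mem_support_iff] at hα
    rw [MvPolynomial.mem_support_iff, MvPolynomial.coeff_divMonomial,
      add_tsub_cancel_of_le hα.2]
    exact hα.1
  · intro β hβ
    rw [MvPolynomial.mem_support_iff, MvPolynomial.coeff_divMonomial] at hβ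
    simp only [Finset.mem_filter, MvPolynomial.mem_support_iff]
    exact ⟨hβ, le_self_add⟩
  · intro α hα
    simp only [Finset.mem_filter] at hα
    exact add_tsub_cancel_of_le hα.2
  · intro β _
    exact add_tsub_cancel_left γ β
  · intro α hα
    simp only [Finset.mem_filter] at hα
    rw [MvPolynomial.coeff_divMonomial, add_tsub_cancel_of_le hα.2]
    ring

lemma lam_g_mul {N : ℕ} (g q f : MvPolynomial (Fin N) ℂ) :
    lam q (g * f) = lam (Cg g q) f := by
  conv_lhs => rw [g.as_sum, Finset.sum_mul, map_sum]
  rw [lam_comm]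
  show _ = lam f (∑ γ ∈ g.support, coeff γ g • q.divMonomial γ)
  rw [map_sum]
  refine Finset.sum_congr rfl fun γ _ => ?_
  rw [lam_monomial_mul, map_smul, smul_eq_mul, lam_comm]

lemma Cg_surjective {N : ℕ} (g : MvPolynomial (Fin N) ℂ) (hg0 : g ≠ 0) :
    LinearMap.range (Cg g) = ⊤ := by
  classical
  set m := MonomialOrder.lex (σ := Fin N) with hm
  obtain ⟨γ0, hγ0s, hγ0min⟩ :=
    Finset.exists_min_image g.support (fun γ => m.toSyn γ)
      (by rwa [MvPolynomial.support_nonempty])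
  have hgγ0 : coeff γ0 g ≠ 0 := MvPolynomial.mem_support_iff.mp hγ0s
  have wf : WellFounded (fun a b : (Fin N →₀ ℕ) => m.toSyn a < m.toSyn b) :=
    InvImage.wf _ m.wf.wf
  have key : ∀ α : Fin N →₀ ℕ, monomial α (1 : ℂ) ∈ LinearMap.range (Cg g) := by
    intro α
    induction α using wf.induction with
    | _ α IH =>
      set h := Cg g (monomial (α + γ0) 1) with hh
      have hα : coeff α h = coeff γ0 g := by
        rw [hh, coeff_Cg, Finset.sum_eq_single γ0]
        · rw [MvPolynomial.coeff_monomial, if_pos (add_comm α γ0), mul_one]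
        · intro γ _ hne
          have hne' : γ + α ≠ α + γ0 := by
            rw [add_comm α γ0]
            exact fun hc => hne (add_right_cancel hc)
          rw [MvPolynomial.coeff_monomial, if_neg (Ne.symm hne'), mul_zero]
        · intro hc; exact absurd hγ0s hc
      set r := h - (coeff γ0 g) • monomial α 1 with hr
      have hrsupp : ∀ δ ∈ r.support, m.toSyn δ < m.toSyn α := by
        intro δ hδ
        have hδα : δ ≠ α := by
          rintro rfl
          have : coeff δ r = 0 := by
            rw [hr, MvPolynomial.coeff_sub, MvPolynomial.coeff_smul, hα,
              MvPolynomial.coeff_monomial, if_pos rfl]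
            simp
          exact MvPolynomial.mem_support_iff.mp hδ this
        have hcr : coeff δ r = coeff δ h := by
          rw [hr, MvPolynomial.coeff_sub, MvPolynomial.coeff_smul,
            MvPolynomial.coeff_monomial, if_neg (Ne.symm hδα)]
          simp
        have hδh : coeff δ h ≠ 0 := hcr ▸ MvPolynomial.mem_support_iff.mp hδ
        rw [hh, coeff_Cg] at hδh
        obtain ⟨γ, hγs, hγne⟩ := Finset.exists_ne_zero_of_sum_ne_zero hδh
        have hcond : γ + δ = α + γ0 := by
          by_contra hc
          rw [MvPolynomial.coeff_monomial, if_neg (Ne.symm hc), mul_zero] at hγne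
          exact hγne rfl
        have hγγ0 : γ ≠ γ0 := by
          rintro rfl
          rw [add_comm α γ] at hcond
          exact hδα (add_left_cancel hcond)
        have hlt : m.toSyn γ0 < m.toSyn γ :=
          lt_of_le_of_ne (hγ0min γ hγs) fun e => hγγ0 (m.toSyn.injective e).symm
        have e1 : m.toSyn δ + m.toSyn γ = m.toSyn α + m.toSyn γ0 := by
          rw [← map_add, ← map_add, add_comm δ γ, hcond]
        have e2 : m.toSyn α + m.toSyn γ0 < m.toSyn α + m.toSyn γ :=
          add_lt_add_right hlt _
        exact lt_of_add_lt_add_right (lt_of_eq_of_lt e1 e2)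
      have hr_mem : r ∈ LinearMap.range (Cg g) := by
        rw [r.as_sum]
        refine Submodule.sum_mem _ fun δ hδ => ?_
        have : monomial δ (coeff δ r) = (coeff δ r) • monomial δ (1 : ℂ) := by
          rw [MvPolynomial.smul_monomial, smul_eq_mul, mul_one]
        rw [this]
        exact Submodule.smul_mem _ _ (IH δ (hrsupp δ hδ))
      have hh_mem : h ∈ LinearMap.range (Cg g) := ⟨monomial (α + γ0) 1, rfl⟩
      have hsm : (coeff γ0 g) • monomial α (1 : ℂ) ∈ LinearMap.range (Cg g) := by
        have : (coeff γ0 g) • monomial α (1 : ℂ) = h - r := (sub_sub_cancel _ _).symm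
        rw [this]
        exact Submodule.sub_mem _ hh_mem hr_mem
      have := Submodule.smul_mem _ (coeff γ0 g)⁻¹ hsm
      rwa [smul_smul, inv_mul_cancel₀ hgγ0, one_smul] at this
  rw [eq_top_iff]
  intro p _
  rw [p.as_sum]
  refine Submodule.sum_mem _ fun v _ => ?_
  have : monomial v (coeff v p) = (coeff v p) • monomial v (1 : ℂ) := by
    rw [MvPolynomial.smul_monomial, smul_eq_mul, mul_one]
  rw [this]
  exact Submodule.smul_mem _ _ (key v)

/-- **Lemma 4.3**: for a nonzero `M`-homogeneous `g`, the operator `Φ_g` on the Macaulay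
dual space `D_0` defined by `Φ_g(λ_p)(f) = λ_p(g·f)` has a linear right inverse: there is
a `ℂ`-linear `Ψ : R →ₗ[ℂ] R` with `λ_{Ψ(p)}(g·f) = λ_p(f)` for all `p, f`, i.e.
`Φ_g ∘ Ψ_g = id` on `D_0`. -/
theorem exists_right_inverse_of_contraction {N : ℕ} {M : Type*} [AddCommGroup M]
    (w : Fin N → M) (g : MvPolynomial (Fin N) ℂ) (hg0 : g ≠ 0)
    (d : M) (hg : g.IsWeightedHomogeneous w d) :
    ∃ Ψ : MvPolynomial (Fin N) ℂ →ₗ[ℂ] MvPolynomial (Fin N) ℂ,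
      ∀ p f : MvPolynomial (Fin N) ℂ, lam (Ψ p) (g * f) = lam p f := by
  obtain ⟨Ψ, hΨ⟩ := (Cg g).exists_rightInverse_of_surjective (Cg_surjective g hg0)
  refine ⟨Ψ, fun p f => ?_⟩
  have hCp : Cg g (Ψ p) = p := by
    have := LinearMap.congr_fun hΨ p
    simpa using this
  rw [lam_g_mul, hCp]
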